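/- Let F(t)=t³ and G(t)=t on [0,1], and for c > 0 let H_c(t) = 1 − ((c−t)/c)^{1/3} on [0,c]. Then F ≤₃ G and G ≤₃ H_c (indeed R_{GH_c}'''(t) = 6c ≥ 0), but R_{FH_c}''(t) = 18c(4t⁷ − 5t⁴ + t), which is positive on (0, 2^{-2/3}) and negative on (2^{-2/3}, 1). Consequently, for every t₀ ∈ ℝ there exists c > 0 such that F ≤_{gs}^{t₀} G and G ≤_{gs}^{t₀} H_c hold but F ≤_{gs}^{t₀} H_c fails; in particular the order ≤_{gs}^{t₀} is not transitive. -/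

import Mathlib

/-- `F ≤_{gs}^{t₀} G` for distributions supported on `(0,1)`: there is a
crossing point `x₀ = F⁻¹(p)`, `p ∈ [0,1]` (so `x₀ ∈ [0,1]`), with
`R_{FG}'' ≤ t₀` to its left and `R_{FG}'' ≥ t₀` to its right. -/
def gsOrd (RFG : ℝ → ℝ) (t₀ : ℝ) : Prop :=
  ∃ x₀ ∈ Set.Icc (0:ℝ) 1,
    (∀ t ∈ Set.Ioo (0:ℝ) 1, t < x₀ → deriv (deriv RFG) t ≤ t₀) ∧
    (∀ t ∈ Set.Ioo (0:ℝ) 1, x₀ < t → t₀ ≤ deriv (deriv RFG) t)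


lemma hdH1 (c x : ℝ) : HasDerivAt (fun s:ℝ => c*(1-(1-s^3)^3)) (c*(9*x^2-18*x^5+9*x^8)) x := by
  have h := ((((hasDerivAt_pow 3 x).const_sub 1).pow 3).const_sub 1).const_mul c
  exact h.congr_deriv (by push_cast [id_eq]; ring)

lemma hdH2 (c x : ℝ) : HasDerivAt (fun s:ℝ => c*(9*s^2-18*s^5+9*s^8)) (18*c*(4*x^7-5*x^4+x)) x := by
  have h := ((((hasDerivAt_pow 2 x).const_mul 9).sub ((hasDerivAt_pow 5 x).const_mul 18)).add
    ((hasDerivAt_pow 8 x).const_mul 9)).const_mul c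
  exact h.congr_deriv (by push_cast [id_eq]; ring)

lemma ddH (c t : ℝ) : deriv (deriv (fun s:ℝ => c*(1-(1-s^3)^3))) t = 18*c*(4*t^7-5*t^4+t) := by
  have h1 : deriv (fun s:ℝ => c*(1-(1-s^3)^3)) = fun s => c*(9*s^2-18*s^5+9*s^8) :=
    funext fun x => (hdH1 c x).deriv
  rw [h1, (hdH2 c t).deriv]

lemma hdG1 (c x : ℝ) : HasDerivAt (fun s:ℝ => c*(1-(1-s)^3)) (c*(3-6*x+3*x^2)) x := by
  have h := ((((hasDerivAt_id x).const_sub 1).pow 3).const_sub 1).const_mul c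
  exact h.congr_deriv (by push_cast [id_eq]; ring)

lemma hdG2 (c x : ℝ) : HasDerivAt (fun s:ℝ => c*(3-6*s+3*s^2)) (c*(6*x-6)) x := by
  have h := ((((hasDerivAt_id x).const_mul 6).const_sub 3).add
    ((hasDerivAt_pow 2 x).const_mul 3)).const_mul c
  exact h.congr_deriv (by push_cast [id_eq]; ring)

lemma hdG3 (c x : ℝ) : HasDerivAt (fun s:ℝ => c*(6*s-6)) (6*c) x := by
  have h := (((hasDerivAt_id x).const_mul 6).sub_const 6).const_mul c
  exact h.congr_deriv (by push_cast [id_eq]; ring)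

lemma ddG (c t : ℝ) : deriv (deriv (fun s:ℝ => c*(1-(1-s)^3))) t = c*(6*t-6) := by
  have h1 : deriv (fun s:ℝ => c*(1-(1-s)^3)) = fun s => c*(3-6*s+3*s^2) :=
    funext fun x => (hdG1 c x).deriv
  rw [h1, (hdG2 c t).deriv]

lemma dddG (c t : ℝ) : deriv (deriv (deriv (fun s:ℝ => c*(1-(1-s)^3)))) t = 6*c := by
  have h1 : deriv (fun s:ℝ => c*(1-(1-s)^3)) = fun s => c*(3-6*s+3*s^2) :=
    funext fun x => (hdG1 c x).deriv
  have h2 : deriv (fun s:ℝ => c*(3-6*s+3*s^2)) = fun s => c*(6*s-6) :=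
    funext fun x => (hdG2 c x).deriv
  rw [h1, h2, (hdG3 c t).deriv]

lemma hdF2 (x : ℝ) : HasDerivAt (fun s:ℝ => 3*s^2) (6*x) x := by
  have h := (hasDerivAt_pow 2 x).const_mul 3
  exact h.congr_deriv (by push_cast [id_eq]; ring)

lemma ddF (t : ℝ) : deriv (deriv (fun s:ℝ => s^3)) t = 6*t := by
  have h1 : deriv (fun s:ℝ => s^3) = fun s => 3*s^2 := by
    funext x
    have h := hasDerivAt_pow 3 x
    rw [h.deriv]; push_cast; ring
  rw [h1, (hdF2 t).deriv]

lemma dddF (t : ℝ) : deriv (deriv (deriv (fun s:ℝ => s^3))) t = 6 := by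
  have h1 : deriv (fun s:ℝ => s^3) = fun s => 3*s^2 := by
    funext x
    have h := hasDerivAt_pow 3 x
    rw [h.deriv]; push_cast; ring
  have h2 : deriv (fun s:ℝ => 3*s^2) = fun s => 6*s :=
    funext fun x => (hdF2 x).deriv
  have h3 : HasDerivAt (fun s:ℝ => 6*s) 6 t := by
    simpa using (hasDerivAt_id t).const_mul 6
  rw [h1, h2, h3.deriv]

lemma acube : ((2:ℝ) ^ (-(2:ℝ)/3))^3 = 1/4 := by
  rw [← Real.rpow_natCast ((2:ℝ)^(-(2:ℝ)/3)) 3, ← Real.rpow_mul (by norm_num : (0:ℝ) ≤ 2)]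
  norm_num

lemma a_pos : (0:ℝ) < (2:ℝ) ^ (-(2:ℝ)/3) := Real.rpow_pos_of_pos (by norm_num) _

lemma a_lt_one : (2:ℝ) ^ (-(2:ℝ)/3) < 1 :=
  Real.rpow_lt_one_of_one_lt_of_neg (by norm_num) (by norm_num)

lemma gs_cube (t₀ : ℝ) : gsOrd (fun s : ℝ => s^3) t₀ := by
  refine ⟨max 0 (min 1 (t₀/6)), ⟨le_max_left _ _, max_le (by norm_num)
    (le_trans (min_le_left _ _) le_rfl)⟩, ?_, ?_⟩
  · intro t ht hlt
    rw [ddF]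
    rcases lt_max_iff.mp hlt with h | h
    · linarith [ht.1]
    · have := lt_of_lt_of_le h (min_le_right 1 (t₀/6))
      linarith
  · intro t ht hlt
    rw [ddF]
    have h := lt_of_le_of_lt (le_max_right 0 (min 1 (t₀/6))) hlt
    rcases min_lt_iff.mp h with h' | h'
    · linarith [ht.2]
    · linarith

lemma gs_GH (c t₀ : ℝ) (hc : 0 < c) : gsOrd (fun s : ℝ => c*(1-(1-s)^3)) t₀ := by
  refine ⟨max 0 (min 1 (1 + t₀/(6*c))), ⟨le_max_left _ _, max_le (by norm_num)
    (min_le_left _ _)⟩, ?_, ?_⟩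
  · intro t ht hlt
    rw [ddG]
    rcases lt_max_iff.mp hlt with h | h
    · linarith [ht.1]
    · have h2 := lt_of_lt_of_le h (min_le_right 1 (1 + t₀/(6*c)))
      have h3 : t - 1 < t₀/(6*c) := by linarith
      have h4 := (lt_div_iff₀ (by linarith : (0:ℝ) < 6*c)).mp h3
      nlinarith
  · intro t ht hlt
    rw [ddG]
    have h := lt_of_le_of_lt (le_max_right 0 (min 1 (1 + t₀/(6*c)))) hlt
    rcases min_lt_iff.mp h with h' | h'
    · linarith [ht.2]
    · have h3 : t₀/(6*c) < t - 1 := by linarith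
      have h4 := (div_lt_iff₀ (by linarith : (0:ℝ) < 6*c)).mp h3
      nlinarith

/-- With `F t = t³`, `G t = t` on `[0,1]` and
`H_c t = 1 - ((c-t)/c)^{1/3}` on `[0,c]` (so `H_c⁻¹ u = c(1-(1-u)³)`,
`R_{GH_c} t = c(1-(1-t)³)`, `R_{FH_c} t = c(1-(1-t³)³)`): `F ≤₃ G` and
`G ≤₃ H_c` (indeed `R_{GH_c}''' = 6c ≥ 0`), but
`R_{FH_c}'' t = 18c(4t⁷ - 5t⁴ + t)` is positive on `(0, 2^{-2/3})` and
negative on `(2^{-2/3}, 1)`. Consequently for every `t₀ ∈ ℝ` there is `c > 0`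
with `F ≤_{gs}^{t₀} G`, `G ≤_{gs}^{t₀} H_c` but not `F ≤_{gs}^{t₀} H_c`;
in particular `≤_{gs}^{t₀}` is not transitive. -/
theorem stmt11 :
    (∀ c : ℝ, 0 < c →
      -- H_c⁻¹(u) = c(1-(1-u)³): H_c (c*(1-(1-u)³)) = u on [0,1]
      (∀ u ∈ Set.Icc (0:ℝ) 1,
        1 - ((c - c*(1-(1-u)^3))/c) ^ ((1:ℝ)/3) = u) ∧
      -- F ≤₃ G: R_{FG} t = t³
      (∀ t ∈ Set.Ioo (0:ℝ) 1,
        0 ≤ deriv (deriv (deriv (fun s : ℝ => s^3))) t) ∧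
      -- G ≤₃ H_c: R_{GH_c}''' = 6c
      (∀ t ∈ Set.Ioo (0:ℝ) 1,
        deriv (deriv (deriv (fun s : ℝ => c*(1-(1-s)^3))) ) t = 6*c) ∧
      -- R_{FH_c}'' t = 18c(4t⁷ - 5t⁴ + t)
      (∀ t ∈ Set.Ioo (0:ℝ) 1,
        deriv (deriv (fun s : ℝ => c*(1-(1-s^3)^3))) t
          = 18*c*(4*t^7 - 5*t^4 + t)) ∧
      (∀ t ∈ Set.Ioo (0:ℝ) ((2:ℝ) ^ (-(2:ℝ)/3)),
        0 < 18*c*(4*t^7 - 5*t^4 + t)) ∧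
      (∀ t ∈ Set.Ioo ((2:ℝ) ^ (-(2:ℝ)/3)) 1,
        18*c*(4*t^7 - 5*t^4 + t) < 0)) ∧
    -- non-transitivity of ≤_{gs}^{t₀} for every threshold t₀
    (∀ t₀ : ℝ, ∃ c : ℝ, 0 < c ∧
      gsOrd (fun s : ℝ => s^3) t₀ ∧
      gsOrd (fun s : ℝ => c*(1-(1-s)^3)) t₀ ∧
      ¬ gsOrd (fun s : ℝ => c*(1-(1-s^3)^3)) t₀) := by
  constructor
  · intro c hc
    refine ⟨?_, ?_, ?_, ?_, ?_, ?_⟩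
    · intro u hu
      have hcn : c ≠ 0 := ne_of_gt hc
      have h1 : (c - c*(1-(1-u)^3))/c = (1-u)^3 := by field_simp; ring
      rw [h1]
      have hun : (0:ℝ) ≤ 1 - u := by linarith [hu.2]
      rw [← Real.rpow_natCast (1-u) 3, ← Real.rpow_mul hun]
      norm_num
    · intro t _; rw [dddF]; norm_num
    · intro t _; rw [dddG]
    · intro t _; rw [ddH]
    · intro t ht
      have h0 := ht.1
      have h1 : t < 1 := lt_trans ht.2 a_lt_one
      have h3 : t^3 < 1/4 := by
        calc t^3 < ((2:ℝ) ^ (-(2:ℝ)/3))^3 :=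
              pow_lt_pow_left₀ ht.2 (le_of_lt h0) (by norm_num)
          _ = 1/4 := acube
      have h4 : t^3 < 1 := by nlinarith
      have key : (0:ℝ) < t*((4*t^3-1)*(t^3-1)) :=
        mul_pos h0 (mul_pos_of_neg_of_neg (by linarith) (by linarith))
      calc (0:ℝ) < 18*c*(t*((4*t^3-1)*(t^3-1))) :=
            mul_pos (by linarith) key
        _ = 18*c*(4*t^7 - 5*t^4 + t) := by ring
    · intro t ht
      have h0 : 0 < t := lt_trans a_pos ht.1
      have h1 : t < 1 := ht.2
      have h3 : 1/4 < t^3 := by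
        calc (1/4:ℝ) = ((2:ℝ) ^ (-(2:ℝ)/3))^3 := acube.symm
          _ < t^3 := pow_lt_pow_left₀ ht.1 (le_of_lt a_pos) (by norm_num)
      have h4 : t^3 < 1 := pow_lt_one₀ (le_of_lt h0) h1 (by norm_num)
      have key : t*((4*t^3-1)*(t^3-1)) < 0 :=
        mul_neg_of_pos_of_neg h0 (mul_neg_of_pos_of_neg (by linarith) (by linarith))
      calc 18*c*(4*t^7 - 5*t^4 + t) = 18*c*(t*((4*t^3-1)*(t^3-1))) := by ring
        _ < 0 := mul_neg_of_pos_of_neg (by linarith) key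
  · intro t₀
    set c : ℝ := 3*(|t₀|+1) with hc_def
    have habs : 0 ≤ |t₀| := abs_nonneg t₀
    have hc : 0 < c := by positivity
    refine ⟨c, hc, gs_cube t₀, gs_GH c t₀ hc, ?_⟩
    rintro ⟨x₀, hx₀, hL, hR⟩
    have hval1 : deriv (deriv (fun s : ℝ => c*(1-(1-s^3)^3))) (1/2) = 63*c/16 := by
      rw [ddH]; norm_num; ring
    have hval2 : deriv (deriv (fun s : ℝ => c*(1-(1-s^3)^3))) (9/10)
        = 18*c*(-4673124/10000000) := by
      rw [ddH]; norm_num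
    have h1 := le_abs_self t₀
    have h2 := neg_abs_le t₀
    by_cases h : x₀ ≤ 1/2
    · have := hR (9/10) ⟨by norm_num, by norm_num⟩ (by linarith)
      rw [hval2] at this
      nlinarith
    · have := hL (1/2) ⟨by norm_num, by norm_num⟩ (by linarith)
      rw [hval1] at this
      nlinarith
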